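/- Let m ≥ 1, let ρ̌ > 0 and ρ̂ > 0 with ρ̂/ρ̌ an integer ≥ 2, and let R(M̌) := B_{ρ̂/2}(M̌) ∩ Δ_ρ̂ for nonempty M̌ ⊆ Δ_ρ̌. Then for every nonempty M̌ ⊆ Δ_ρ̌: (i) R(M̌) is nonempty and dist_H(R(M̌), M̌) ≤ ρ̂/2; (ii) R(M̌) minimizes M̂ ↦ dist_H(M̂, M̌) over all nonempty M̂ ⊆ Δ_ρ̂; and (iii) every nonempty M̂ ⊆ Δ_ρ̂ that minimizes M̂ ↦ dist_H(M̂, M̌) satisfies M̂ ⊆ R(M̌). -/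

import Mathlib

noncomputable section

/-- The grid `Δ_ρ = ρℤ^m` in `ℝ^m` (with the maximum norm). -/
def grid (m : ℕ) (ρ : ℝ) : Set (Fin m → ℝ) := {x | ∀ j, ∃ k : ℤ, x j = ρ * k}

/-- `B_δ(A)`: the closed `δ`-neighbourhood of `A` in the maximum norm. -/
def nbhd (m : ℕ) (δ : ℝ) (A : Set (Fin m → ℝ)) : Set (Fin m → ℝ) :=
  {x | Metric.infDist x A ≤ δ}

/-- The restriction operator `R(M̌) = B_{ρ̂/2}(M̌) ∩ Δ_ρ̂`. -/
def Rop (m : ℕ) (rh : ℝ) (M : Set (Fin m → ℝ)) : Set (Fin m → ℝ) :=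
  nbhd m (rh / 2) M ∩ grid m rh

/-- The interpolation operator `I(M̂) = B_{ρ̂/2}(M̂) ∩ Δ_ρ̌`. -/
def Iop (m : ℕ) (rc rh : ℝ) (M : Set (Fin m → ℝ)) : Set (Fin m → ℝ) :=
  nbhd m (rh / 2) M ∩ grid m rc

section Aux

/-- 1D: a grid point within `r/2` of `u` is a nearest grid point. -/
lemma aux_one_dim (r u p q : ℝ) (hr : 0 < r) (hp : ∃ a : ℤ, p = r * a)
    (hq : ∃ b : ℤ, q = r * b) (h : |u - p| ≤ r / 2) : |u - p| ≤ |u - q| := by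
  obtain ⟨a, rfl⟩ := hp
  obtain ⟨b, rfl⟩ := hq
  rcases eq_or_ne a b with h' | h'
  · rw [h']
  · have h1 : (1 : ℝ) ≤ |(a : ℝ) - (b : ℝ)| := by
      have h1x : (1:ℤ) ≤ |a - b| := Int.one_le_abs (sub_ne_zero.mpr h')
      exact_mod_cast h1x
    have h2 : r ≤ |r * a - r * b| := by
      rw [← mul_sub, abs_mul, abs_of_pos hr]
      nlinarith
    have h3 : |r * a - r * b| ≤ |u - r * a| + |u - r * b| := by
      calc |r * (a:ℝ) - r * b| = |(r * a - u) + (u - r * b)| := by ring_nf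
        _ ≤ |r * (a:ℝ) - u| + |u - r * b| := abs_add_le _ _
        _ = |u - r * (a:ℝ)| + |u - r * b| := by rw [abs_sub_comm (r * (a:ℝ)) u]
    linarith

/-- Key lemma: a point of `grid m rh` within `rh/2` of `x` is a nearest
point of `grid m rh` to `x`. -/
lemma aux_key (m : ℕ) (rh : ℝ) (hrh : 0 < rh) (x y g : Fin m → ℝ)
    (hy : y ∈ grid m rh) (hg : g ∈ grid m rh) (hd : dist x y ≤ rh / 2) :
    dist x y ≤ dist x g := by
  rw [dist_pi_le_iff dist_nonneg]
  intro j
  have h1 : dist (x j) (y j) ≤ rh / 2 := le_trans (dist_le_pi_dist x y j) hd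
  have h2 : |x j - y j| ≤ |x j - g j| := by
    refine aux_one_dim rh (x j) (y j) (g j) hrh (hy j) (hg j) ?_
    rwa [Real.dist_eq] at h1
  calc dist (x j) (y j) = |x j - y j| := Real.dist_eq _ _
    _ ≤ |x j - g j| := h2
    _ = dist (x j) (g j) := (Real.dist_eq _ _).symm
    _ ≤ dist x g := dist_le_pi_dist x g j

/-- Rounding: every point has a grid point within `rh/2`. -/
lemma aux_round (m : ℕ) (rh : ℝ) (hrh : 0 < rh) (x : Fin m → ℝ) :
    ∃ g ∈ grid m rh, dist x g ≤ rh / 2 := by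
  refine ⟨fun j => rh * (round (x j / rh) : ℤ), fun j => ⟨round (x j / rh), rfl⟩, ?_⟩
  rw [dist_pi_le_iff (by positivity)]
  intro j
  rw [Real.dist_eq]
  have h1 : |x j / rh - (round (x j / rh) : ℤ)| ≤ 1 / 2 := abs_sub_round _
  have h2 : x j - rh * (round (x j / rh) : ℤ) = rh * (x j / rh - (round (x j / rh) : ℤ)) := by
    field_simp
  rw [h2, abs_mul, abs_of_pos hrh]
  nlinarith

/-- Distances between grid points are multiples of the grid width. -/
lemma aux_mult (m : ℕ) (hm : 1 ≤ m) (rc : ℝ) (hrc : 0 < rc) (x y : Fin m → ℝ)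
    (hx : x ∈ grid m rc) (hy : y ∈ grid m rc) : ∃ k : ℕ, dist x y = rc * k := by
  choose a ha using hx
  choose b hb using hy
  have hcoord : ∀ j, dist (x j) (y j) = rc * ((a j - b j).natAbs : ℕ) := by
    intro j
    rw [Real.dist_eq, ha j, hb j, ← mul_sub, abs_mul, abs_of_pos hrc]
    congr 1
    rw [Nat.cast_natAbs]
    push_cast
    ring
  have hne : (Finset.univ : Finset (Fin m)).Nonempty := ⟨⟨0, hm⟩, Finset.mem_univ _⟩
  obtain ⟨j₀, _, hj₀⟩ := Finset.exists_mem_eq_sup Finset.univ hne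
    (fun j => (a j - b j).natAbs)
  set K : ℕ := Finset.univ.sup (fun j => (a j - b j).natAbs) with hK
  refine ⟨K, le_antisymm ?_ ?_⟩
  · rw [dist_pi_le_iff (by positivity)]
    intro j
    rw [hcoord j]
    have : (a j - b j).natAbs ≤ K :=
      Finset.le_sup (f := fun j => (a j - b j).natAbs) (Finset.mem_univ j)
    have := (Nat.cast_le (α := ℝ)).mpr this
    nlinarith
  · calc rc * (K : ℝ) = dist (x j₀) (y j₀) := by rw [hcoord j₀, hj₀]
      _ ≤ dist x y := dist_le_pi_dist x y j₀

/-- If `infDist y Mc ≤ rh/2` with everything on the fine grid, the inf is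
witnessed within `rh/2`. -/
lemma aux_witness (m : ℕ) (hm : 1 ≤ m) (rc : ℝ) (hrc : 0 < rc) (n : ℕ)
    (y : Fin m → ℝ) (Mc : Set (Fin m → ℝ)) (hMc : Mc ⊆ grid m rc)
    (hne : Mc.Nonempty) (hy : y ∈ grid m rc)
    (h : Metric.infDist y Mc ≤ (n : ℝ) * rc / 2) :
    ∃ x ∈ Mc, dist y x ≤ (n : ℝ) * rc / 2 := by
  have hlt : Metric.infDist y Mc < (n : ℝ) * rc / 2 + rc / 2 := by linarith
  obtain ⟨x, hxM, hx⟩ := (Metric.infDist_lt_iff hne).mp hlt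
  obtain ⟨k, hk⟩ := aux_mult m hm rc hrc y x hy (hMc hxM)
  refine ⟨x, hxM, ?_⟩
  rw [hk] at hx ⊢
  have h2k : (2 * k : ℝ) < (n : ℝ) + 1 := by nlinarith
  have h2k' : 2 * k ≤ n := by exact_mod_cast Nat.lt_succ_iff.mp (by exact_mod_cast h2k)
  have : (2 * k : ℝ) ≤ (n : ℝ) := by exact_mod_cast h2k'
  nlinarith

end Aux
theorem stmt13 (m : ℕ) (hm : 1 ≤ m) (rc rh : ℝ) (hrc : 0 < rc) (hrh : 0 < rh)
    (n : ℕ) (hn : 2 ≤ n) (hq : rh = (n : ℝ) * rc)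
    (Mc : Set (Fin m → ℝ)) (hMc : Mc ⊆ grid m rc) (hne : Mc.Nonempty) :
    -- (i) `R(M̌)` is nonempty and is within Hausdorff distance `ρ̂/2` of `M̌`
    ((Rop m rh Mc).Nonempty ∧
      EMetric.hausdorffEdist (Rop m rh Mc) Mc ≤ ENNReal.ofReal (rh / 2)) ∧
    -- (ii) `R(M̌)` is a best approximation of `M̌` among nonempty subsets of `Δ_ρ̂`
    (∀ Mh : Set (Fin m → ℝ), Mh ⊆ grid m rh → Mh.Nonempty →
      EMetric.hausdorffEdist (Rop m rh Mc) Mc ≤ EMetric.hausdorffEdist Mh Mc) ∧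
    -- (iii) every best approximation is contained in `R(M̌)`
    (∀ Mh : Set (Fin m → ℝ), Mh ⊆ grid m rh → Mh.Nonempty →
      (∀ Mh' : Set (Fin m → ℝ), Mh' ⊆ grid m rh → Mh'.Nonempty →
        EMetric.hausdorffEdist Mh Mc ≤ EMetric.hausdorffEdist Mh' Mc) →
      Mh ⊆ Rop m rh Mc) := by
  have hrh2 : (0:ℝ) ≤ rh / 2 := by positivity
  have hsub : grid m rh ⊆ grid m rc := by
    intro y hy j
    obtain ⟨k, hk⟩ := hy j
    exact ⟨(n : ℤ) * k, by rw [hk, hq]; push_cast; ring⟩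
  have round_mem : ∀ x ∈ Mc, ∃ g, g ∈ Rop m rh Mc ∧ dist x g ≤ rh / 2 ∧ g ∈ grid m rh := by
    intro x hx
    obtain ⟨g, hg, hdg⟩ := aux_round m rh hrh x
    refine ⟨g, ⟨?_, hg⟩, hdg, hg⟩
    show Metric.infDist g Mc ≤ rh / 2
    exact le_trans (Metric.infDist_le_dist_of_mem hx) (by rwa [dist_comm])
  have infE_of_nbhd : ∀ y : Fin m → ℝ, Metric.infDist y Mc ≤ rh / 2 →
      EMetric.infEdist y Mc ≤ ENNReal.ofReal (rh / 2) := by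
    intro y hy
    show Metric.infEDist y Mc ≤ _
    rw [← ENNReal.ofReal_toReal (Metric.infEdist_ne_top hne)]
    exact ENNReal.ofReal_le_ofReal hy
  have nbhd_of_infE : ∀ y : Fin m → ℝ,
      EMetric.infEdist y Mc ≤ ENNReal.ofReal (rh / 2) → Metric.infDist y Mc ≤ rh / 2 := by
    intro y hy
    have h := ENNReal.toReal_mono (by simp) hy
    rwa [ENNReal.toReal_ofReal hrh2] at h
  have hRopNe : (Rop m rh Mc).Nonempty := by
    obtain ⟨x₀, hx₀⟩ := hne
    obtain ⟨g, hg, -, -⟩ := round_mem x₀ hx₀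
    exact ⟨g, hg⟩
  have hRophaus : EMetric.hausdorffEdist (Rop m rh Mc) Mc ≤ ENNReal.ofReal (rh / 2) := by
    refine EMetric.hausdorffEdist_le_of_infEdist ?_ ?_
    · rintro y ⟨hynb, -⟩
      exact infE_of_nbhd y hynb
    · intro x hx
      obtain ⟨g, hg, hdg, -⟩ := round_mem x hx
      calc EMetric.infEdist x (Rop m rh Mc) ≤ edist x g :=
            EMetric.infEdist_le_edist_of_mem hg
        _ = ENNReal.ofReal (dist x g) := edist_dist x g
        _ ≤ ENNReal.ofReal (rh / 2) := ENNReal.ofReal_le_ofReal hdg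
  -- the key comparison: any candidate `Mh` is at least as far from `Mc`
  have hbest : ∀ Mh : Set (Fin m → ℝ), Mh ⊆ grid m rh → Mh.Nonempty →
      EMetric.hausdorffEdist (Rop m rh Mc) Mc ≤ EMetric.hausdorffEdist Mh Mc := by
    intro Mh hMh hMhne
    have key : ∀ x ∈ Mc, ∀ g : Fin m → ℝ, g ∈ grid m rh → dist x g ≤ rh / 2 →
        ENNReal.ofReal (dist x g) ≤ EMetric.hausdorffEdist Mh Mc := by
      intro x hx g hg hdg
      have h1 : ENNReal.ofReal (dist x g) ≤ EMetric.infEdist x Mh := by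
        show _ ≤ Metric.infEDist x Mh
        rw [EMetric.le_infEdist]
        intro z hz
        rw [edist_dist]
        exact ENNReal.ofReal_le_ofReal (aux_key m rh hrh x g z hg (hMh hz) hdg)
      calc ENNReal.ofReal (dist x g) ≤ EMetric.infEdist x Mh := h1
        _ ≤ EMetric.hausdorffEdist Mc Mh := EMetric.infEdist_le_hausdorffEdist_of_mem hx
        _ = EMetric.hausdorffEdist Mh Mc := EMetric.hausdorffEdist_comm
    refine EMetric.hausdorffEdist_le_of_infEdist ?_ ?_
    · rintro y ⟨hynb, hygrid⟩
      have hynb' : Metric.infDist y Mc ≤ (n : ℝ) * rc / 2 := by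
        rwa [hq] at hynb
      obtain ⟨x, hxM, hdx⟩ := aux_witness m hm rc hrc n y Mc hMc hne (hsub hygrid) hynb'
      have hdx' : dist x y ≤ rh / 2 := by rw [dist_comm, hq]; exact hdx
      calc EMetric.infEdist y Mc ≤ edist y x := EMetric.infEdist_le_edist_of_mem hxM
        _ = ENNReal.ofReal (dist x y) := by rw [edist_dist, dist_comm]
        _ ≤ EMetric.hausdorffEdist Mh Mc := key x hxM y hygrid hdx'
    · intro x hx
      obtain ⟨g, hg, hdg, hggrid⟩ := round_mem x hx
      calc EMetric.infEdist x (Rop m rh Mc) ≤ edist x g :=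
            EMetric.infEdist_le_edist_of_mem hg
        _ = ENNReal.ofReal (dist x g) := edist_dist x g
        _ ≤ EMetric.hausdorffEdist Mh Mc := key x hx g hggrid hdg
  refine ⟨⟨hRopNe, hRophaus⟩, hbest, ?_⟩
  intro Mh hMh hMhne hopt y hyMh
  have h1 : EMetric.hausdorffEdist Mh Mc ≤ ENNReal.ofReal (rh / 2) :=
    le_trans (hopt (Rop m rh Mc) Set.inter_subset_right hRopNe) hRophaus
  have h2 : EMetric.infEdist y Mc ≤ ENNReal.ofReal (rh / 2) :=
    le_trans (EMetric.infEdist_le_hausdorffEdist_of_mem hyMh) h1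
  exact ⟨nbhd_of_infE y h2, hMh hyMh⟩
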